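/- Suppose (G,χ) is a k-coloured graph on n vertices with k < n - 2, every vertex has degree at least 3, and 2|E| = 2n - 2 + 2k (the g_1-tight edge count when k < n-2). If no vertex of degree exactly 3 is colour-isolated, then a contradiction follows; hence some colour-isolated vertex of degree three exists whenever every vertex has degree at least three. -/

import Mathlib

open Finset

attribute [local instance] Classical.propDecidable

noncomputable section

variable {V C : Type*}

/-- The set of vertices spanned by an edge set. -/
def eVerts [Fintype V] [DecidableEq V] (F : Finset (Sym2 V)) : Finset V :=
  Finset.univ.filter fun v => ∃ e ∈ F, v ∈ e

/-- The set of colours appearing on the vertices spanned by an edge set. -/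
def eCols [Fintype V] [DecidableEq V] [DecidableEq C] (χ : V → Option C)
    (F : Finset (Sym2 V)) : Finset C :=
  (eVerts F).biUnion fun v => (χ v).toFinset

/-- The number of colours appearing on the vertices spanned by an edge set. -/
def kCount [Fintype V] [DecidableEq V] [DecidableEq C] (χ : V → Option C)
    (F : Finset (Sym2 V)) : ℤ :=
  (eCols χ F).card

/-- The set of all colours used by the colouring. -/
def usedCols [Fintype V] [DecidableEq C] (χ : V → Option C) : Finset C :=
  Finset.univ.biUnion fun v => (χ v).toFinset

/-- The number of connected components of the graph `(V(F), F)`. -/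
def omegaCount [Fintype V] [DecidableEq V] (F : Finset (Sym2 V)) : ℤ :=
  ((eVerts F).image fun v =>
    (eVerts F).filter fun u =>
      (SimpleGraph.fromEdgeSet (↑F : Set (Sym2 V))).Reachable v u).card

/-- The function `h_d(F) = min{k(F), |V(F)| - (d+1)}`. -/
def hFun [Fintype V] [DecidableEq V] [DecidableEq C] (χ : V → Option C) (d : ℕ)
    (F : Finset (Sym2 V)) : ℤ :=
  min (kCount χ F) (((eVerts F).card : ℤ) - (d + 1))

/-- A vertex is colour-isolated if it is coloured and no other vertex has its colour. -/
def ColourIsolated (χ : V → Option C) (v : V) : Prop :=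
  ∃ c, χ v = some c ∧ ∀ u, u ≠ v → χ u ≠ some c

/-- in a `k`-coloured graph with `k < n - 2`, minimum degree at least 3 and
`2|E| = 2n - 2 + 2k`, some colour-isolated vertex of degree three exists. -/
theorem colour_isolated_degree_three {V C : Type*} [Fintype V] [DecidableEq V] [DecidableEq C]
    (G : SimpleGraph V) (χ : V → Option C) (k : ℕ)
    (E : Finset (Sym2 V)) (hE : ∀ e, e ∈ E ↔ e ∈ G.edgeSet)
    (hk : (usedCols χ).card = k)
    (hkn : (k : ℤ) < (Fintype.card V : ℤ) - 2)
    (hdeg : ∀ v, 3 ≤ G.degree v)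
    (hcount : 2 * (E.card : ℤ) = 2 * (Fintype.card V : ℤ) - 2 + 2 * (k : ℤ)) :
    ∃ v, ColourIsolated χ v ∧ G.degree v = 3 := by
  classical
  by_contra hcon
  push_neg at hcon
  set n := Fintype.card V with hn
  -- E is the edge finset
  have hEeq : E = G.edgeFinset := by
    ext e; rw [SimpleGraph.mem_edgeFinset]; exact hE e
  have hsum : ∑ v, G.degree v = 2 * E.card := by
    rw [hEeq]; exact SimpleGraph.sum_degrees_eq_twice_card_edges G
  set D3 := Finset.univ.filter (fun v => G.degree v = 3) with hD3
  set ND3 := Finset.univ.filter (fun v => ¬ G.degree v = 3) with hND3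
  have hcardsplit : D3.card + ND3.card = n :=
    Finset.card_filter_add_card_filter_not _
  have hsplit : ∑ v ∈ D3, G.degree v + ∑ v ∈ ND3, G.degree v = ∑ v, G.degree v :=
    Finset.sum_filter_add_sum_filter_not _ _ _
  have hA : ∑ v ∈ D3, G.degree v = 3 * D3.card := by
    rw [Finset.sum_congr rfl (fun v hv => (Finset.mem_filter.mp hv).2)]
    simp [mul_comm, hD3]
  have hB : 4 * ND3.card ≤ ∑ v ∈ ND3, G.degree v := by
    have := Finset.card_nsmul_le_sum ND3 (fun v => G.degree v) 4 (fun v hv => by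
      have h1 := hdeg v
      have h2 : ¬ G.degree v = 3 := (Finset.mem_filter.mp hv).2
      show 4 ≤ G.degree v
      omega)
    simpa [mul_comm] using this
  -- colour classes
  set cls := fun c : C => Finset.univ.filter (fun v => χ v = some c) with hcls
  have hsum_cls : ∑ c ∈ usedCols χ, (cls c).card ≤ n := by
    rw [← Finset.card_biUnion (by
      intro c hc d hd hcd
      simp only [Finset.disjoint_left, hcls, Finset.mem_filter]
      rintro v ⟨-, h1⟩ ⟨-, h2⟩
      exact hcd (by rw [h1] at h2; exact Option.some_inj.mp h2))]
    exact Finset.card_le_univ _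
  have hcls_pos : ∀ c ∈ usedCols χ, 1 ≤ (cls c).card := by
    intro c hc
    simp only [usedCols, Finset.mem_biUnion, Option.mem_toFinset, Option.mem_def] at hc
    obtain ⟨v, -, hv⟩ := hc
    have : v ∈ cls c := by simp [hcls, hv]
    exact Finset.card_pos.mpr ⟨v, this⟩
  set S := (usedCols χ).filter (fun c => (cls c).card = 1) with hS
  set NS := (usedCols χ).filter (fun c => ¬ (cls c).card = 1) with hNS
  have hScard : S.card + NS.card = k := by
    rw [← hk]; exact Finset.card_filter_add_card_filter_not _
  have hsplitS : ∑ c ∈ S, (cls c).card + ∑ c ∈ NS, (cls c).card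
      = ∑ c ∈ usedCols χ, (cls c).card :=
    Finset.sum_filter_add_sum_filter_not _ _ _
  have hSsum : ∑ c ∈ S, (cls c).card = S.card := by
    rw [Finset.sum_congr rfl (fun c hc => (Finset.mem_filter.mp hc).2)]
    simp [hS]
  have hNSsum : 2 * NS.card ≤ ∑ c ∈ NS, (cls c).card := by
    have := Finset.card_nsmul_le_sum NS (fun c => (cls c).card) 2 (fun c hc => by
      have h1 := hcls_pos c (Finset.mem_filter.mp hc).1
      have h2 : ¬ (cls c).card = 1 := (Finset.mem_filter.mp hc).2
      show 2 ≤ (cls c).card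
      omega)
    simpa [mul_comm] using this
  -- isolated vertices
  set ISO := Finset.univ.filter (fun v => ColourIsolated χ v) with hISO
  -- injection from S into ISO
  have hSISO : S.card ≤ ISO.card := by
    have hVne : Nonempty V := by
      rw [← Fintype.card_pos_iff]; omega
    set f : C → V := fun c => if h : (cls c).Nonempty then h.choose else Classical.arbitrary V
      with hf
    have hfmem : ∀ c ∈ S, χ (f c) = some c ∧ ∀ u, χ u = some c → u = f c := by
      intro c hc
      obtain ⟨hc1, hc2⟩ := Finset.mem_filter.mp hc
      have hne : (cls c).Nonempty := Finset.card_pos.mp (by omega)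
      have hmem : f c ∈ cls c := by simp only [hf, dif_pos hne]; exact hne.choose_spec
      have hχ : χ (f c) = some c := (Finset.mem_filter.mp hmem).2
      refine ⟨hχ, fun u hu => ?_⟩
      have humem : u ∈ cls c := by simp [hcls, hu]
      obtain ⟨x, hx⟩ := Finset.card_eq_one.mp hc2
      rw [hx] at hmem humem
      simp only [Finset.mem_singleton] at hmem humem
      rw [humem, hmem]
    apply Finset.card_le_card_of_injOn f
    · intro c hc
      obtain ⟨h1, h2⟩ := hfmem c hc
      refine Finset.mem_filter.mpr ⟨Finset.mem_univ _, c, h1, fun u hu hc' => hu (h2 u hc')⟩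
    · intro c hc d hd hcd
      have h1 := (hfmem c hc).1
      have h2 := (hfmem d hd).1
      rw [hcd, h2] at h1
      exact (Option.some_inj.mp h1).symm
  -- ISO and D3 are disjoint
  have hdisjID : ISO.card + D3.card ≤ n := by
    rw [← Finset.card_union_of_disjoint (by
      simp only [Finset.disjoint_left, hISO, hD3, Finset.mem_filter]
      rintro v ⟨-, h1⟩ ⟨-, h2⟩
      exact hcon v h1 h2)]
    exact Finset.card_le_univ _
  omega
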